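/- Let 0 < L_b ≤ L_θ ≤ U_θ ≤ U_b < ∞. Then there exists a constant κ ∈ (0, 1), depending only on L_b, U_b, L_θ and U_θ, such that |F(x_b, x_θ) − x_θ| ≤ κ·|x_b − x_θ| for all x_b ∈ [L_b, U_b] and all x_θ ∈ [L_θ, U_θ]. -/

import Mathlib

open MeasureTheory Real Filter

/-- Standard one-dimensional Gaussian pdf. -/
noncomputable def phi1 (x : ℝ) : ℝ := (Real.sqrt (2 * π))⁻¹ * Real.exp (-x ^ 2 / 2)

/-- `w(y, b) = e^{yb}/(e^{yb} + e^{−yb})`. -/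
noncomputable def wgt (y b : ℝ) : ℝ :=
  Real.exp (y * b) / (Real.exp (y * b) + Real.exp (-(y * b)))

/-- `P(x_a, x_b, x_θ) = ∫ w(y − x_a, x_b)·(φ(y − x_θ) + φ(y + x_θ))/2 dy`. -/
noncomputable def Pfun (xa xb xθ : ℝ) : ℝ :=
  ∫ y, wgt (y - xa) xb * ((phi1 (y - xθ) + phi1 (y + xθ)) / 2)

/-- `Γ(x_a, x_b, x_θ) = ∫ w(y − x_a, x_b)·y·(φ(y − x_θ) + φ(y + x_θ))/2 dy`. -/
noncomputable def Gfun (xa xb xθ : ℝ) : ℝ :=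
  ∫ y, wgt (y - xa) xb * y * ((phi1 (y - xθ) + phi1 (y + xθ)) / 2)

/-- `F(x_b, x_θ) = ∫ (2 w(y + x_θ, x_b) − 1)·(y + x_θ)·φ(y) dy`. -/
noncomputable def Ffun (xb xθ : ℝ) : ℝ :=
  ∫ y, (2 * wgt (y + xθ) xb - 1) * (y + xθ) * phi1 y

/-- Standard Gaussian cdf. -/
noncomputable def PhiCdf (x : ℝ) : ℝ := ∫ y in Set.Iic x, phi1 y


/-- tanh in exp form -/
noncomputable def Tt (u : ℝ) : ℝ := (exp u - exp (-u)) / (exp u + exp (-u))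
/-- sech^2 in exp form -/
noncomputable def sch (u : ℝ) : ℝ := 4 / (exp u + exp (-u))^2

lemma S_pos (u : ℝ) : 0 < exp u + exp (-u) := by positivity

lemma S_ge_two (u : ℝ) : 2 ≤ exp u + exp (-u) := by
  have h1 : exp (u/2) * exp (u/2) = exp u := by rw [← exp_add]; ring_nf
  have h2 : exp (-(u/2)) * exp (-(u/2)) = exp (-u) := by rw [← exp_add]; ring_nf
  have h3 : 0 ≤ (exp (u/2) - exp (-(u/2)))^2 := sq_nonneg _
  have h4 : exp (u/2) * exp (-(u/2)) = 1 := by rw [← exp_add]; simp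
  nlinarith

lemma S_mono {p q : ℝ} (h0 : 0 ≤ p) (h : p ≤ q) :
    exp p + exp (-p) ≤ exp q + exp (-q) := by
  have h1 : exp (-p) - exp (-q) = exp (-p-q) * (exp q - exp p) := by
    rw [mul_sub, ← exp_add, ← exp_add]; ring_nf
  have h2 : exp (-p-q) ≤ 1 := exp_le_one_iff.2 (by linarith)
  have h3 : exp p ≤ exp q := exp_le_exp.2 h
  nlinarith [exp_pos q, exp_pos p]

lemma S_even (u : ℝ) : exp (-u) + exp (-(-u)) = exp u + exp (-u) := by rw [neg_neg]; ring

lemma Tt_odd (u : ℝ) : Tt (-u) = - Tt u := by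
  unfold Tt
  rw [neg_neg]
  rw [neg_div']
  rw [div_eq_div_iff (by positivity : (rexp (-u) + rexp u) ≠ 0) (by positivity : (rexp u + rexp (-u)) ≠ 0)]
  ring

lemma Tt_abs_le_one (u : ℝ) : |Tt u| ≤ 1 := by
  unfold Tt
  rw [abs_div, abs_of_pos (S_pos u), div_le_one (S_pos u)]
  have := exp_pos u; have := exp_pos (-u)
  rw [abs_le]; constructor <;> nlinarith

lemma Tt_nonneg {u : ℝ} (hu : 0 ≤ u) : 0 ≤ Tt u := by
  unfold Tt
  apply div_nonneg _ (le_of_lt (S_pos u))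
  have : exp (-u) ≤ exp u := exp_le_exp.2 (by linarith)
  linarith

lemma Tt_eq (u : ℝ) : Tt u = 1 - 2 / (exp (2*u) + 1) := by
  unfold Tt
  have h1 : exp (2*u) = exp u * exp u := by rw [← exp_add]; ring_nf
  have h2 : exp u * exp (-u) = 1 := by rw [← exp_add]; simp
  have := exp_pos u; have := exp_pos (-u); have := S_pos u
  field_simp
  rw [mul_comm u 2]
  nlinarith [S_pos u]

lemma Tt_mono : Monotone Tt := by
  intro a b hab
  rw [Tt_eq, Tt_eq]
  have h1 : exp (2*a) + 1 ≤ exp (2*b) + 1 := by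
    have := exp_le_exp.2 (by linarith : 2*a ≤ 2*b); linarith
  have h2 : 0 < exp (2*a) + 1 := by positivity
  have h3 : 0 < exp (2*b) + 1 := by positivity
  have h4 := div_le_div_of_nonneg_left (by norm_num : (0:ℝ) ≤ 2) h2 h1
  linarith

lemma sch_pos (u : ℝ) : 0 < sch u := by unfold sch; positivity

lemma sch_le_one (u : ℝ) : sch u ≤ 1 := by
  unfold sch
  rw [div_le_one (by positivity)]
  nlinarith [S_ge_two u]

lemma sch_even (u : ℝ) : sch (-u) = sch u := by unfold sch; rw [neg_neg, add_comm]

lemma sch_anti {u v : ℝ} (h : |u| ≤ |v|) : sch v ≤ sch u := by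
  have h1 : exp |u| + exp (-|u|) ≤ exp |v| + exp (-|v|) := S_mono (abs_nonneg u) h
  have e : ∀ w : ℝ, exp |w| + exp (-|w|) = exp w + exp (-w) := by
    intro w
    rcases abs_cases w with ⟨h, _⟩ | ⟨h, _⟩ <;> rw [h] <;> ring_nf
  rw [e, e] at h1
  unfold sch
  apply div_le_div_of_nonneg_left (by norm_num) (by positivity)
  nlinarith [S_pos u, S_pos v]

lemma hasDerivAt_Tt (u : ℝ) : HasDerivAt Tt (sch u) u := by
  have hN : HasDerivAt (fun u : ℝ => exp u - exp (-u)) (exp u + exp (-u)) u := by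
    have h1 : HasDerivAt (fun u : ℝ => exp u) (exp u) u := Real.hasDerivAt_exp u
    have h2 : HasDerivAt (fun u : ℝ => exp (-u)) (-exp (-u)) u := by
      simpa using (hasDerivAt_neg u).exp
    exact (h1.sub h2).congr_deriv (by ring)
  have hD : HasDerivAt (fun u : ℝ => exp u + exp (-u)) (exp u - exp (-u)) u := by
    have h1 : HasDerivAt (fun u : ℝ => exp u) (exp u) u := Real.hasDerivAt_exp u
    have h2 : HasDerivAt (fun u : ℝ => exp (-u)) (-exp (-u)) u := by
      simpa using (hasDerivAt_neg u).exp
    exact (h1.add h2).congr_deriv (by ring)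
  have := hN.div hD (ne_of_gt (S_pos u))
  refine this.congr_deriv (Eq.symm ?_)
  unfold sch
  have h2 : exp u * exp (-u) = 1 := by rw [← exp_add]; simp
  field_simp
  ring_nf
  nlinarith [S_pos u]


lemma phi1_pos (x : ℝ) : 0 < phi1 x := by
  unfold phi1
  have : 0 < Real.sqrt (2 * π) := Real.sqrt_pos.2 (by positivity)
  positivity

lemma phi1_cont : Continuous phi1 := by
  unfold phi1; fun_prop

lemma phi1_even (x : ℝ) : phi1 (-x) = phi1 x := by unfold phi1; ring_nf

lemma phi1_le_phi1 {x y : ℝ} (h : |x| ≤ |y|) : phi1 y ≤ phi1 x := by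
  unfold phi1
  have hs : 0 < Real.sqrt (2 * π) := Real.sqrt_pos.2 (by positivity)
  have : -y^2/2 ≤ -x^2/2 := by nlinarith [sq_abs x, sq_abs y, abs_nonneg x, abs_nonneg y]
  have := exp_le_exp.2 this
  apply mul_le_mul_of_nonneg_left this (by positivity)

lemma integrable_exp_gauss : Integrable fun x : ℝ => exp (-x^2/2) := by
  have := integrable_exp_neg_mul_sq (by norm_num : (0:ℝ) < 1/2)
  convert this using 2 with x
  ring_nf

lemma integrable_sq_exp_gauss : Integrable fun x : ℝ => x^2 * exp (-x^2/2) := by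
  apply Integrable.mono' ((integrable_exp_neg_mul_sq (by norm_num : (0:ℝ) < 1/4)).const_mul 4)
  · exact (Continuous.mul (by fun_prop) (by fun_prop)).aestronglyMeasurable
  · filter_upwards with x
    rw [Real.norm_eq_abs, abs_of_nonneg (by positivity)]
    have h1 : x^2/4 + 1 ≤ exp (x^2/4) := Real.add_one_le_exp _
    have h2 : exp (-x^2/2) = exp (-(1/4) * x^2) * exp (-x^2/4) := by rw [← exp_add]; ring_nf
    have h3 : 0 < exp (-x^2/4) := exp_pos _
    have h4 : x^2 * exp (-x^2/4) ≤ 4 := by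
      have h5 : exp (-x^2/4) * exp (x^2/4) = 1 := by rw [← exp_add]; ring_nf; exact exp_zero
      nlinarith [exp_pos (x^2/4)]
    calc x^2 * exp (-x^2/2) = (x^2 * exp (-x^2/4)) * exp (-(1/4) * x^2) := by
          rw [h2]; ring
      _ ≤ 4 * exp (-(1/4) * x^2) := by nlinarith [exp_pos (-(1/4) * x^2)]

lemma integrable_abs_exp_gauss : Integrable fun x : ℝ => |x| * exp (-x^2/2) := by
  apply Integrable.mono' (integrable_exp_gauss.add integrable_sq_exp_gauss)
  · exact (Continuous.mul (by fun_prop) (by fun_prop)).aestronglyMeasurable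
  · filter_upwards with x
    rw [Real.norm_eq_abs, abs_of_nonneg (by positivity)]
    have h : |x| ≤ 1 + x^2 := by nlinarith [sq_abs x, sq_nonneg (|x| - 1)]
    have h2 := exp_pos (-x^2/2)
    show |x| * rexp (-x ^ 2 / 2) ≤ rexp (-x ^ 2 / 2) + x ^ 2 * rexp (-x ^ 2 / 2)
    nlinarith

/-- master integrable bound: `(A + B*x^2) * phi1 x` -/
lemma integrable_gauss_poly (A B : ℝ) : Integrable fun x : ℝ => (A + B * x^2) * phi1 x := by
  have h : (fun x : ℝ => (A + B * x^2) * phi1 x)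
      = fun x => (A * (Real.sqrt (2 * π))⁻¹) * exp (-x^2/2)
        + (B * (Real.sqrt (2 * π))⁻¹) * (x^2 * exp (-x^2/2)) := by
    funext x; unfold phi1; ring
  rw [h]
  exact (integrable_exp_gauss.const_mul _).add (integrable_sq_exp_gauss.const_mul _)

lemma integrable_of_gauss_bound {f : ℝ → ℝ} (hf : Continuous f) (A B c : ℝ)
    (h : ∀ x, |f x| ≤ (A + B * (x - c)^2) * phi1 (x - c)) : Integrable f := by
  apply Integrable.mono' ((integrable_gauss_poly A B).comp_sub_right c)
  · exact hf.aestronglyMeasurable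
  · filter_upwards with x
    rw [Real.norm_eq_abs]
    exact h x

lemma sqrt_two_pi_pos : 0 < Real.sqrt (2 * π) := Real.sqrt_pos.2 (by positivity)

lemma integral_exp_gauss : ∫ x : ℝ, exp (-x^2/2) = Real.sqrt (2 * π) := by
  have h := integral_gaussian (1/2)
  have h2 : (fun x : ℝ => exp (-(1/2) * x^2)) = fun x : ℝ => exp (-x^2/2) := by
    funext x; ring_nf
  rw [h2] at h
  rw [h]
  rw [show π / (1/2) = 2 * π by ring]

lemma integrable_phi1 : Integrable phi1 := by
  unfold phi1; exact integrable_exp_gauss.const_mul _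

lemma integral_phi1 : ∫ x : ℝ, phi1 x = 1 := by
  unfold phi1
  rw [integral_const_mul, integral_exp_gauss]
  exact inv_mul_cancel₀ (ne_of_gt sqrt_two_pi_pos)

lemma integrable_id_phi1 : Integrable fun x : ℝ => x * phi1 x := by
  apply integrable_of_gauss_bound (by exact (continuous_id.mul phi1_cont)) 1 1 0
  intro x
  rw [abs_mul, abs_of_pos (phi1_pos x)]
  simp only [sub_zero]
  have := phi1_pos x
  nlinarith [sq_abs x, sq_nonneg (|x| - 1)]

lemma integral_id_phi1 : ∫ x : ℝ, x * phi1 x = 0 := by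
  have h := integral_neg_eq_self (fun x : ℝ => x * phi1 x) volume
  have h2 : (fun x : ℝ => (-x) * phi1 (-x)) = fun x : ℝ => -(x * phi1 x) := by
    funext x; rw [phi1_even]; ring
  rw [h2, integral_neg] at h
  linarith

lemma integrable_sq_phi1 : Integrable fun x : ℝ => x^2 * phi1 x := by
  have h : (fun x : ℝ => x^2 * phi1 x) = fun x => (0 + 1 * x^2) * phi1 x := by
    funext x; ring
  rw [h]; exact integrable_gauss_poly 0 1

lemma integral_sq_exp_gauss : ∫ x : ℝ, x^2 * exp (-x^2/2) = Real.sqrt (2 * π) := by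
  have hu : ∀ x : ℝ, HasDerivAt (fun y : ℝ => y) 1 x := fun x => hasDerivAt_id x
  have hv : ∀ x : ℝ, HasDerivAt (fun y : ℝ => -exp (-y^2/2)) (x * exp (-x^2/2)) x := by
    intro x
    have h1 : HasDerivAt (fun y : ℝ => -y^2/2) (-x) x := by
      have h := ((hasDerivAt_pow 2 x).div_const 2).neg
      norm_num at h
      rw [show (fun y : ℝ => -y^2/2) = -fun x => x^2/2 by funext y; simp only [Pi.neg_apply]; ring]
      exact h
    have := (h1.exp).neg
    exact this.congr_deriv (by ring)
  have huv' : Integrable ((fun y : ℝ => y) * fun x : ℝ => x * exp (-x^2/2)) := by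
    have : ((fun y : ℝ => y) * fun x : ℝ => x * exp (-x^2/2)) = fun x : ℝ => x^2 * exp (-x^2/2) := by
      funext x; simp [Pi.mul_apply]; ring
    rw [this]; exact integrable_sq_exp_gauss
  have hu'v : Integrable ((fun _ : ℝ => (1:ℝ)) * fun y : ℝ => -exp (-y^2/2)) := by
    have : ((fun _ : ℝ => (1:ℝ)) * fun y : ℝ => -exp (-y^2/2)) = fun x : ℝ => -exp (-x^2/2) := by
      funext x; simp [Pi.mul_apply]
    rw [this]; exact integrable_exp_gauss.neg
  have huv : Integrable ((fun y : ℝ => y) * fun y : ℝ => -exp (-y^2/2)) := by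
    have : ((fun y : ℝ => y) * fun y : ℝ => -exp (-y^2/2)) = fun x : ℝ => -(x * exp (-x^2/2)) := by
      funext x; simp [Pi.mul_apply]
    rw [this]
    apply Integrable.neg
    apply Integrable.mono' integrable_abs_exp_gauss
      (Continuous.aestronglyMeasurable (by fun_prop : Continuous fun x : ℝ => x * exp (-x^2/2)))
    filter_upwards with x
    rw [Real.norm_eq_abs, abs_mul, abs_of_pos (exp_pos _)]
  have key := MeasureTheory.integral_mul_deriv_eq_deriv_mul_of_integrable (fun x _ => hu x) (fun x _ => hv x) huv' hu'v huv
  have h1 : ∫ x : ℝ, x * (x * exp (-x^2/2)) = ∫ x : ℝ, x^2 * exp (-x^2/2) := by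
    congr 1; funext x; ring
  have h2 : ∫ x : ℝ, (1:ℝ) * (-exp (-x^2/2)) = -Real.sqrt (2 * π) := by
    have : (fun x : ℝ => (1:ℝ) * (-exp (-x^2/2))) = fun x : ℝ => -exp (-x^2/2) := by
      funext x; ring
    rw [this, integral_neg, integral_exp_gauss]
  rw [h1] at key
  rw [key, h2, neg_neg]

lemma integral_sq_phi1 : ∫ x : ℝ, x^2 * phi1 x = 1 := by
  unfold phi1
  have h : (fun x : ℝ => x^2 * ((Real.sqrt (2 * π))⁻¹ * exp (-x^2/2)))
      = fun x : ℝ => (Real.sqrt (2 * π))⁻¹ * (x^2 * exp (-x^2/2)) := by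
    funext x; ring
  rw [h, integral_const_mul, integral_sq_exp_gauss]
  exact inv_mul_cancel₀ (ne_of_gt sqrt_two_pi_pos)

/-- shift decomposition of the gaussian pdf -/
lemma phi1_shift (x c : ℝ) : phi1 (x - c) = phi1 x * exp (-c^2/2) * exp (c * x) := by
  unfold phi1
  rw [mul_assoc, mul_assoc, ← exp_add, ← exp_add]
  congr 2
  ring

lemma phi1_shift' (x c : ℝ) : phi1 (x + c) = phi1 x * exp (-c^2/2) * exp (-(c * x)) := by
  have := phi1_shift x (-c)
  simp only [sub_neg_eq_add] at this
  rw [this]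
  ring_nf


lemma two_wgt_sub_one (y b : ℝ) : 2 * wgt y b - 1 = Tt (y * b) := by
  unfold wgt Tt
  have h := S_pos (y * b)
  field_simp
  ring

lemma Tt_cont : Continuous Tt := by
  unfold Tt
  exact Continuous.div (by fun_prop) (by fun_prop) (fun x => ne_of_gt (S_pos x))

lemma abs_le_one_add_sq (u : ℝ) : |u| ≤ 1 + u^2 := by
  nlinarith [sq_abs u, sq_nonneg (|u| - 1)]

lemma integrable_Tt_id_phi1 (b c : ℝ) : Integrable fun x => Tt (x * b) * x * phi1 (x - c) := by
  apply integrable_of_gauss_bound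
    (((Tt_cont.comp (by fun_prop)).mul continuous_id).mul (phi1_cont.comp (by fun_prop)))
    (|c| + 1) 1 c
  intro x
  show |Tt (x * b) * x * phi1 (x - c)| ≤ _
  rw [abs_mul, abs_mul, abs_of_pos (phi1_pos _)]
  have h1 : |Tt (x * b)| ≤ 1 := Tt_abs_le_one _
  have h2 : |x| ≤ |c| + 1 + (x - c)^2 := by
    have k1 := abs_le_one_add_sq (x - c)
    have k2 : |x| ≤ |x - c| + |c| := by
      calc |x| = |(x - c) + c| := by ring_nf
      _ ≤ |x - c| + |c| := abs_add_le _ _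
    linarith
  have hp := phi1_pos (x - c)
  calc |Tt (x * b)| * |x| * phi1 (x - c) ≤ 1 * |x| * phi1 (x - c) := by
        apply mul_le_mul_of_nonneg_right (mul_le_mul_of_nonneg_right h1 (abs_nonneg x)) (le_of_lt hp)
    _ = |x| * phi1 (x - c) := by ring
    _ ≤ (|c| + 1 + (x - c)^2) * phi1 (x - c) := mul_le_mul_of_nonneg_right h2 (le_of_lt hp)
    _ = (|c| + 1 + 1 * (x - c)^2) * phi1 (x - c) := by ring

lemma integrable_id_phi1_shift (c : ℝ) : Integrable fun x : ℝ => x * phi1 (x - c) := by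
  have h : (fun x : ℝ => x * phi1 (x - c))
      = (fun u : ℝ => u * phi1 u + c * phi1 u) ∘ (fun x => x - c) := by
    funext x; simp [Function.comp]; ring
  rw [h]
  exact (integrable_id_phi1.add (integrable_phi1.const_mul c)).comp_sub_right c

lemma integral_id_phi1_shift (c : ℝ) : ∫ x : ℝ, x * phi1 (x - c) = c := by
  have h := integral_add_right_eq_self (μ := volume) (fun x : ℝ => x * phi1 (x - c)) c
  have h2 : (fun x : ℝ => (x + c) * phi1 (x + c - c)) = fun x : ℝ => x * phi1 x + c * phi1 x := by
    funext x; simp; ring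
  rw [← h, h2, integral_add integrable_id_phi1 (integrable_phi1.const_mul c),
    integral_id_phi1, integral_const_mul, integral_phi1]
  ring

lemma Ffun_eq (b θ : ℝ) : Ffun b θ = ∫ x, Tt (x * b) * x * phi1 (x - θ) := by
  unfold Ffun
  rw [← integral_add_right_eq_self (μ := volume) (fun x => Tt (x * b) * x * phi1 (x - θ)) θ]
  congr 1
  funext y
  rw [two_wgt_sub_one]
  simp

lemma J_neg (b θ : ℝ) : ∫ x, Tt (x * b) * x * phi1 (x - θ) = ∫ x, Tt (x * b) * x * phi1 (x + θ) := by
  rw [← integral_neg_eq_self (fun x => Tt (x * b) * x * phi1 (x + θ)) volume]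
  congr 1
  funext x
  have h1 : (-x : ℝ) + θ = -(x - θ) := by ring
  rw [h1, phi1_even, show (-x) * b = -(x * b) by ring, Tt_odd]
  ring

lemma Ffun_sym (b θ : ℝ) :
    Ffun b θ = ∫ x, Tt (x * b) * x * ((phi1 (x - θ) + phi1 (x + θ)) / 2) := by
  have hi1 := integrable_Tt_id_phi1 b θ
  have hi2 : Integrable fun x => Tt (x * b) * x * phi1 (x + θ) := by
    have := integrable_Tt_id_phi1 b (-θ)
    simpa [sub_neg_eq_add] using this
  have h : (fun x => Tt (x * b) * x * ((phi1 (x - θ) + phi1 (x + θ)) / 2))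
      = fun x => (Tt (x * b) * x * phi1 (x - θ) + Tt (x * b) * x * phi1 (x + θ)) / 2 := by
    funext x; ring
  rw [h]
  rw [integral_div, integral_add hi1 hi2, ← J_neg, Ffun_eq]
  ring

lemma Tt_key_identity (x θ : ℝ) :
    Tt (x * θ) * (phi1 (x - θ) + phi1 (x + θ)) = phi1 (x - θ) - phi1 (x + θ) := by
  rw [phi1_shift x θ, phi1_shift' x θ]
  unfold Tt
  have h := S_pos (x * θ)
  rw [show θ * x = x * θ by ring]
  field_simp

lemma Ffun_diag (θ : ℝ) : Ffun θ θ = θ := by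
  rw [Ffun_sym]
  have h : (fun x => Tt (x * θ) * x * ((phi1 (x - θ) + phi1 (x + θ)) / 2))
      = fun x => (x * phi1 (x - θ) - x * phi1 (x + θ)) / 2 := by
    funext x
    have h0 := Tt_key_identity x θ
    calc Tt (x * θ) * x * ((phi1 (x - θ) + phi1 (x + θ)) / 2)
        = x * (Tt (x * θ) * (phi1 (x - θ) + phi1 (x + θ))) / 2 := by ring
      _ = x * (phi1 (x - θ) - phi1 (x + θ)) / 2 := by rw [h0]
      _ = (x * phi1 (x - θ) - x * phi1 (x + θ)) / 2 := by ring
  rw [h]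
  have hi1 := integrable_id_phi1_shift θ
  have hi2 : Integrable fun x : ℝ => x * phi1 (x + θ) := by
    have := integrable_id_phi1_shift (-θ)
    simpa [sub_neg_eq_add] using this
  have h2 : (fun x : ℝ => (x * phi1 (x - θ) - x * phi1 (x + θ)) / 2)
      = fun x : ℝ => (x * phi1 (x - θ) - x * phi1 (x + θ)) / 2 := rfl
  rw [integral_div, integral_sub hi1 hi2]
  have h3 : ∫ x : ℝ, x * phi1 (x + θ) = -θ := by
    have := integral_id_phi1_shift (-θ)
    simpa [sub_neg_eq_add] using this
  rw [integral_id_phi1_shift, h3]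
  ring

noncomputable def gq (b x : ℝ) : ℝ := b * x * sch (x * b) + Tt (x * b)
noncomputable def Dfun (θ s : ℝ) : ℝ := ∫ y, (y + θ)^2 * sch ((y + θ) * s) * phi1 y
noncomputable def Gder (b s : ℝ) : ℝ := ∫ y, gq b (y + s) * phi1 y

lemma sch_cont : Continuous sch := by
  unfold sch
  exact Continuous.div (by fun_prop) (by fun_prop) (fun x => by positivity)

lemma gq_cont (b : ℝ) : Continuous (gq b) := by
  unfold gq
  exact Continuous.add ((continuous_const.mul continuous_id).mul (sch_cont.comp (by fun_prop))) (Tt_cont.comp (by fun_prop))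

lemma gq_odd (b x : ℝ) : gq b (-x) = -gq b x := by
  unfold gq
  rw [show (-x) * b = -(x * b) by ring, sch_even, Tt_odd]
  ring

lemma gq_abs_le (b x : ℝ) : |gq b x| ≤ |b| * |x| + 1 := by
  unfold gq
  have h1 := Tt_abs_le_one (x * b)
  have h2 : |b * x * sch (x * b)| ≤ |b| * |x| := by
    rw [abs_mul, abs_mul]
    have h3 := sch_pos (x * b)
    have h4 := sch_le_one (x * b)
    have h5 : |sch (x * b)| ≤ 1 := by rw [abs_of_pos h3]; exact h4
    calc |b| * |x| * |sch (x * b)| ≤ |b| * |x| * 1 :=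
          mul_le_mul_of_nonneg_left h5 (by positivity)
      _ = |b| * |x| := by ring
  calc |b * x * sch (x * b) + Tt (x * b)| ≤ |b * x * sch (x * b)| + |Tt (x * b)| := abs_add_le _ _
    _ ≤ |b| * |x| + 1 := by linarith

lemma gq_nonneg {b x : ℝ} (hb : 0 ≤ b) (hx : 0 ≤ x) : 0 ≤ gq b x := by
  unfold gq
  have := sch_pos (x * b)
  have := Tt_nonneg (mul_nonneg hx hb)
  positivity

lemma integrable_sq_shift_phi1 (θ : ℝ) : Integrable fun y : ℝ => (y + θ)^2 * phi1 y := by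
  apply integrable_of_gauss_bound (Continuous.mul (by continuity) phi1_cont) (2*θ^2) 2 0
  intro y
  simp only [sub_zero]
  show |(y + θ)^2 * phi1 y| ≤ _
  rw [abs_of_nonneg (mul_nonneg (sq_nonneg _) (le_of_lt (phi1_pos y)))]
  have := phi1_pos y
  nlinarith [sq_nonneg (y - θ), sq_nonneg (y + θ)]

lemma integrable_sq_sch_phi1 (θ s : ℝ) : Integrable fun y : ℝ => (y + θ)^2 * sch ((y + θ) * s) * phi1 y := by
  apply Integrable.mono' (integrable_sq_shift_phi1 θ)
    (Continuous.aestronglyMeasurable (by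
      exact ((Continuous.mul (by continuity) (sch_cont.comp (by continuity))).mul phi1_cont)))
  filter_upwards with y
  rw [Real.norm_eq_abs, abs_of_nonneg (mul_nonneg (mul_nonneg (sq_nonneg _) (le_of_lt (sch_pos _))) (le_of_lt (phi1_pos y)))]
  have h1 := sch_le_one ((y + θ) * s)
  have h2 := sch_pos ((y + θ) * s)
  have h3 := phi1_pos y
  calc (y + θ)^2 * sch ((y + θ) * s) * phi1 y ≤ (y + θ)^2 * 1 * phi1 y := by
        apply mul_le_mul_of_nonneg_right (mul_le_mul_of_nonneg_left h1 (sq_nonneg _)) (le_of_lt h3)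
    _ = (y + θ)^2 * phi1 y := by ring

lemma integrable_gq_phi1 (b s : ℝ) : Integrable fun y : ℝ => gq b (y + s) * phi1 y := by
  apply integrable_of_gauss_bound (((gq_cont b).comp (by continuity)).mul phi1_cont)
    (|b| * (|s| + 1) + 1) (|b|) 0
  intro y
  simp only [sub_zero]
  show |gq b (y + s) * phi1 y| ≤ _
  rw [abs_mul, abs_of_pos (phi1_pos y)]
  have h1 := gq_abs_le b (y + s)
  have h2 : |y + s| ≤ |y| + |s| := abs_add_le _ _
  have h3 : |y| ≤ 1 + y^2 := abs_le_one_add_sq y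
  have h4 := phi1_pos y
  have h5 : |gq b (y + s)| ≤ |b| * (|s| + 1) + 1 + |b| * y^2 := by
    have : |b| * |y + s| ≤ |b| * (|y| + |s|) := mul_le_mul_of_nonneg_left h2 (abs_nonneg b)
    have : |b| * (|y| + |s|) ≤ |b| * (1 + y^2 + |s|) := by
      apply mul_le_mul_of_nonneg_left (by linarith) (abs_nonneg b)
    nlinarith [abs_nonneg b]
  calc |gq b (y + s)| * phi1 y ≤ (|b| * (|s| + 1) + 1 + |b| * y^2) * phi1 y :=
        mul_le_mul_of_nonneg_right h5 (le_of_lt h4)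
    _ = (|b| * (|s| + 1) + 1 + |b| * y^2) * phi1 y := rfl

lemma Ffun_eq' (b θ : ℝ) : Ffun b θ = ∫ y, Tt ((y + θ) * b) * (y + θ) * phi1 y := by
  unfold Ffun
  congr 1
  funext y
  rw [two_wgt_sub_one]

lemma integrable_Ffun_integrand (b θ : ℝ) :
    Integrable fun y : ℝ => Tt ((y + θ) * b) * (y + θ) * phi1 y := by
  have h := integrable_Tt_id_phi1 b θ
  have h2 := h.comp_sub_right (-θ)
  simpa [sub_neg_eq_add] using h2

lemma hasDerivAt_Ffun_b (θ s : ℝ) : HasDerivAt (fun b => Ffun b θ) (Dfun θ s) s := by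
  have h : ∀ b, Ffun b θ = ∫ y, Tt ((y + θ) * b) * (y + θ) * phi1 y := fun b => Ffun_eq' b θ
  have key := hasDerivAt_integral_of_dominated_loc_of_deriv_le (μ := volume)
    (F := fun b y => Tt ((y + θ) * b) * (y + θ) * phi1 y)
    (F' := fun b y => (y + θ)^2 * sch ((y + θ) * b) * phi1 y)
    (x₀ := s) (bound := fun y => (y + θ)^2 * phi1 y) (Metric.ball_mem_nhds s one_pos)
    (Eventually.of_forall fun b => (Continuous.aestronglyMeasurable (by
      exact ((Tt_cont.comp (by fun_prop)).mul (by continuity)).mul phi1_cont)))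
    (integrable_Ffun_integrand s θ)
    (Continuous.aestronglyMeasurable (by
      exact (Continuous.mul (by continuity) (sch_cont.comp (by fun_prop))).mul phi1_cont))
    (Eventually.of_forall fun y => fun b _ => by
      rw [Real.norm_eq_abs, abs_of_nonneg (mul_nonneg (mul_nonneg (sq_nonneg _)
        (le_of_lt (sch_pos _))) (le_of_lt (phi1_pos y)))]
      have h1 := sch_le_one ((y + θ) * b)
      have h3 := phi1_pos y
      calc (y + θ)^2 * sch ((y + θ) * b) * phi1 y ≤ (y + θ)^2 * 1 * phi1 y := by
            apply mul_le_mul_of_nonneg_right (mul_le_mul_of_nonneg_left h1 (sq_nonneg _)) (le_of_lt h3)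
        _ = (y + θ)^2 * phi1 y := by ring)
    (integrable_sq_shift_phi1 θ)
    (Eventually.of_forall fun y => fun b _ => by
      have h1 : HasDerivAt (fun b : ℝ => (y + θ) * b) (y + θ) b := by
        simpa using (hasDerivAt_id b).const_mul (y + θ)
      have h2 : HasDerivAt (fun b : ℝ => Tt ((y + θ) * b)) (sch ((y + θ) * b) * (y + θ)) b :=
        (hasDerivAt_Tt ((y + θ) * b)).comp b h1
      have h3 := (h2.mul_const (y + θ)).mul_const (phi1 y)
      exact h3.congr_deriv (by ring))
  have h2 := key.2
  have h3 : (fun b => ∫ y, Tt ((y + θ) * b) * (y + θ) * phi1 y) = fun b => Ffun b θ := by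
    funext b; rw [h b]
  rw [h3] at h2
  exact h2

lemma hasDerivAt_Ffun_θ (b s : ℝ) : HasDerivAt (fun θ => Ffun b θ) (Gder b s) s := by
  have key := hasDerivAt_integral_of_dominated_loc_of_deriv_le (μ := volume)
    (F := fun θ y => Tt ((y + θ) * b) * (y + θ) * phi1 y)
    (F' := fun θ y => gq b (y + θ) * phi1 y)
    (x₀ := s) (bound := fun y => (|b| * (|s| + 2) + 1 + |b| * y^2) * phi1 y) (Metric.ball_mem_nhds s one_pos)
    (Eventually.of_forall fun θ => (Continuous.aestronglyMeasurable (by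
      exact ((Tt_cont.comp (by fun_prop)).mul (by continuity)).mul phi1_cont)))
    (integrable_Ffun_integrand b s)
    (Continuous.aestronglyMeasurable (((gq_cont b).comp (by continuity)).mul phi1_cont))
    (Eventually.of_forall fun y => fun θ hθ => by
      rw [Real.norm_eq_abs, abs_mul, abs_of_pos (phi1_pos y)]
      have h1 := gq_abs_le b (y + θ)
      have h4 := phi1_pos y
      have hθ' : |θ - s| < 1 := by
        have := Metric.mem_ball.1 hθ
        rwa [Real.dist_eq] at this
      have h2 : |y + θ| ≤ |y| + |s| + 1 := by
        calc |y + θ| = |(y + (θ - s)) + s| := by ring_nf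
          _ ≤ |y + (θ - s)| + |s| := abs_add_le _ _
          _ ≤ |y| + |θ - s| + |s| := by linarith [abs_add_le y (θ - s)]
          _ ≤ |y| + |s| + 1 := by linarith
      have h3 : |y| ≤ 1 + y^2 := abs_le_one_add_sq y
      have h5 : |gq b (y + θ)| ≤ |b| * (|s| + 2) + 1 + |b| * y^2 := by
        have k1 : |b| * |y + θ| ≤ |b| * (|y| + |s| + 1) := mul_le_mul_of_nonneg_left h2 (abs_nonneg b)
        have k2 : |b| * (|y| + |s| + 1) ≤ |b| * (1 + y^2 + |s| + 1) :=
          mul_le_mul_of_nonneg_left (by linarith) (abs_nonneg b)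
        nlinarith [abs_nonneg b]
      exact mul_le_mul_of_nonneg_right h5 (le_of_lt h4))
    ((integrable_gauss_poly (|b| * (|s| + 2) + 1) (|b|)))
    (Eventually.of_forall fun y => fun θ _ => by
      have h1 : HasDerivAt (fun θ : ℝ => (y + θ) * b) b θ := by
        have : HasDerivAt (fun θ : ℝ => y + θ) 1 θ := by
          simpa using (hasDerivAt_id θ).const_add y
        simpa using this.mul_const b
      have h2 : HasDerivAt (fun θ : ℝ => Tt ((y + θ) * b)) (sch ((y + θ) * b) * b) θ :=
        by have := (hasDerivAt_Tt ((y + θ) * b)).comp θ h1; exact this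
      have h3 : HasDerivAt (fun θ : ℝ => y + θ) 1 θ := by
        simpa using (hasDerivAt_id θ).const_add y
      have h4 := (h2.mul h3).mul_const (phi1 y)
      exact h4.congr_deriv (by unfold gq; ring))
  have h2 := key.2
  have h3 : (fun θ => ∫ y, Tt ((y + θ) * b) * (y + θ) * phi1 y) = fun θ => Ffun b θ := by
    funext θ; rw [Ffun_eq']
  rw [h3] at h2
  exact h2

lemma Dfun_nonneg (θ s : ℝ) : 0 ≤ Dfun θ s := by
  unfold Dfun
  apply integral_nonneg
  intro y
  have := sch_pos ((y + θ) * s)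
  have := phi1_pos y
  positivity

lemma Dfun_anti {θ s : ℝ} (hθ : 0 ≤ θ) (hs : θ ≤ s) : Dfun θ s ≤ Dfun θ θ := by
  unfold Dfun
  apply integral_mono (integrable_sq_sch_phi1 θ s) (integrable_sq_sch_phi1 θ θ)
  intro y
  have h1 : sch ((y + θ) * s) ≤ sch ((y + θ) * θ) := by
    apply sch_anti
    rw [abs_mul, abs_mul]
    apply mul_le_mul_of_nonneg_left _ (abs_nonneg (y + θ))
    rw [abs_of_nonneg hθ, abs_of_nonneg (le_trans hθ hs)]
    exact hs
  have h3 := phi1_pos y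
  apply mul_le_mul_of_nonneg_right (mul_le_mul_of_nonneg_left h1 (sq_nonneg _)) (le_of_lt h3)

lemma integrable_sq_sch_phi1_shift (θ c : ℝ) :
    Integrable fun x : ℝ => x^2 * sch (x * θ) * phi1 (x - c) := by
  apply integrable_of_gauss_bound
    ((Continuous.mul (by continuity) (sch_cont.comp (by fun_prop))).mul (phi1_cont.comp (by fun_prop)))
    (2*c^2) 2 c
  intro x
  show |x^2 * sch (x * θ) * phi1 (x - c)| ≤ _
  rw [abs_of_nonneg (mul_nonneg (mul_nonneg (sq_nonneg _) (le_of_lt (sch_pos _)))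
    (le_of_lt (phi1_pos _)))]
  have h1 := sch_le_one (x * θ)
  have h2 := sch_pos (x * θ)
  have h3 := phi1_pos (x - c)
  have h4 : x^2 ≤ 2*c^2 + 2*(x - c)^2 := by nlinarith [sq_nonneg (x - 2*c)]
  calc x^2 * sch (x * θ) * phi1 (x - c) ≤ x^2 * 1 * phi1 (x - c) := by
        apply mul_le_mul_of_nonneg_right (mul_le_mul_of_nonneg_left h1 (sq_nonneg _)) (le_of_lt h3)
    _ = x^2 * phi1 (x - c) := by ring
    _ ≤ (2*c^2 + 2*(x - c)^2) * phi1 (x - c) := mul_le_mul_of_nonneg_right h4 (le_of_lt h3)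

lemma Dfun_diag_le (θ : ℝ) : Dfun θ θ ≤ exp (-θ^2/2) := by
  have h0 : Dfun θ θ = ∫ x, x^2 * sch (x * θ) * phi1 (x - θ) := by
    unfold Dfun
    rw [← integral_add_right_eq_self (μ := volume) (fun x => x^2 * sch (x * θ) * phi1 (x - θ)) θ]
    congr 1
    funext y
    simp
  have hneg : ∫ x, x^2 * sch (x * θ) * phi1 (x - θ) = ∫ x, x^2 * sch (x * θ) * phi1 (x + θ) := by
    rw [← integral_neg_eq_self (fun x => x^2 * sch (x * θ) * phi1 (x + θ)) volume]
    congr 1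
    funext x
    have h1 : (-x : ℝ) + θ = -(x - θ) := by ring
    rw [h1, phi1_even, show (-x) * θ = -(x * θ) by ring, sch_even]
    ring
  have hsym : Dfun θ θ = ∫ x, x^2 * sch (x * θ) * ((phi1 (x - θ) + phi1 (x + θ)) / 2) := by
    have hi1 := integrable_sq_sch_phi1_shift θ θ
    have hi2 : Integrable fun x : ℝ => x^2 * sch (x * θ) * phi1 (x + θ) := by
      have := integrable_sq_sch_phi1_shift θ (-θ)
      simpa [sub_neg_eq_add] using this
    have h : (fun x => x^2 * sch (x * θ) * ((phi1 (x - θ) + phi1 (x + θ)) / 2))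
        = fun x => (x^2 * sch (x * θ) * phi1 (x - θ) + x^2 * sch (x * θ) * phi1 (x + θ)) / 2 := by
      funext x; ring
    rw [h, integral_div, integral_add hi1 hi2, ← hneg, h0]
    ring
  rw [hsym]
  have hmono : ∫ x, x^2 * sch (x * θ) * ((phi1 (x - θ) + phi1 (x + θ)) / 2)
      ≤ ∫ x, exp (-θ^2/2) * (x^2 * phi1 x) := by
    apply integral_mono _ ((integrable_sq_phi1).const_mul _)
    · intro x
      have key : sch (x * θ) * ((phi1 (x - θ) + phi1 (x + θ)) / 2)
          ≤ exp (-θ^2/2) * phi1 x := by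
        rw [phi1_shift x θ, phi1_shift' x θ]
        unfold sch
        have hS := S_pos (x * θ)
        have hS2 := S_ge_two (x * θ)
        have hphi := phi1_pos x
        have hexp := exp_pos (-θ^2/2)
        have harg : θ * x = x * θ := by ring
        rw [harg]
        rw [div_mul_eq_mul_div, div_le_iff₀ (by positivity)]
        have expand : 4 * ((phi1 x * exp (-θ^2/2) * exp (x * θ) + phi1 x * exp (-θ^2/2) * exp (-(x * θ))) / 2)
            = 2 * (phi1 x * exp (-θ^2/2)) * (exp (x * θ) + exp (-(x * θ))) := by ring
        rw [expand]
        calc 2 * (phi1 x * exp (-θ^2/2)) * (exp (x * θ) + exp (-(x * θ)))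
            ≤ (exp (x * θ) + exp (-(x * θ))) * (phi1 x * exp (-θ^2/2)) * (exp (x * θ) + exp (-(x * θ))) := by
              apply mul_le_mul_of_nonneg_right _ (le_of_lt hS)
              nlinarith [mul_pos hphi hexp]
          _ = exp (-θ^2/2) * phi1 x * (exp (x * θ) + exp (-(x * θ)))^2 := by ring
      calc x^2 * sch (x * θ) * ((phi1 (x - θ) + phi1 (x + θ)) / 2)
          = x^2 * (sch (x * θ) * ((phi1 (x - θ) + phi1 (x + θ)) / 2)) := by ring
        _ ≤ x^2 * (exp (-θ^2/2) * phi1 x) := mul_le_mul_of_nonneg_left key (sq_nonneg x)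
        _ = exp (-θ^2/2) * (x^2 * phi1 x) := by ring
    · have hi1 := integrable_sq_sch_phi1_shift θ θ
      have hi2 : Integrable fun x : ℝ => x^2 * sch (x * θ) * phi1 (x + θ) := by
        have := integrable_sq_sch_phi1_shift θ (-θ)
        simpa [sub_neg_eq_add] using this
      have h : (fun x => x^2 * sch (x * θ) * ((phi1 (x - θ) + phi1 (x + θ)) / 2))
          = fun x => (x^2 * sch (x * θ) * phi1 (x - θ) + x^2 * sch (x * θ) * phi1 (x + θ)) / 2 := by
        funext x; ring
      rw [h]
      exact (hi1.add hi2).div_const 2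
  calc ∫ x, x^2 * sch (x * θ) * ((phi1 (x - θ) + phi1 (x + θ)) / 2)
      ≤ ∫ x, exp (-θ^2/2) * (x^2 * phi1 x) := hmono
    _ = exp (-θ^2/2) * ∫ x, x^2 * phi1 x := integral_const_mul _ _
    _ = exp (-θ^2/2) := by rw [integral_sq_phi1]; ring

lemma integrable_gq_phi1_shift (b c : ℝ) : Integrable fun x : ℝ => gq b x * phi1 (x - c) := by
  apply integrable_of_gauss_bound ((gq_cont b).mul (phi1_cont.comp (by fun_prop)))
    (|b| * (|c| + 1) + 1) (|b|) c
  intro x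
  show |gq b x * phi1 (x - c)| ≤ _
  rw [abs_mul, abs_of_pos (phi1_pos _)]
  have h1 := gq_abs_le b x
  have h2 : |x| ≤ |x - c| + |c| := by
    calc |x| = |(x - c) + c| := by ring_nf
      _ ≤ |x - c| + |c| := abs_add_le _ _
  have h3 : |x - c| ≤ 1 + (x - c)^2 := abs_le_one_add_sq _
  have h4 := phi1_pos (x - c)
  have h5 : |gq b x| ≤ |b| * (|c| + 1) + 1 + |b| * (x - c)^2 := by
    have k1 : |b| * |x| ≤ |b| * (|x - c| + |c|) := mul_le_mul_of_nonneg_left h2 (abs_nonneg b)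
    have k2 : |b| * (|x - c| + |c|) ≤ |b| * (1 + (x - c)^2 + |c|) :=
      mul_le_mul_of_nonneg_left (by linarith) (abs_nonneg b)
    nlinarith [abs_nonneg b]
  exact mul_le_mul_of_nonneg_right h5 (le_of_lt h4)

lemma phi1_ratio (x s : ℝ) : phi1 (x + s) = phi1 (x - s) * exp (-(2 * s * x)) := by
  unfold phi1
  rw [mul_assoc, ← exp_add]
  congr 2
  ring

noncomputable def epsC (Lb : ℝ) : ℝ := Tt (Lb^2) * (phi1 1 * (1 - exp (-(2 * Lb^2))) / 2)

lemma epsC_pos {Lb : ℝ} (h : 0 < Lb) : 0 < epsC Lb := by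
  unfold epsC
  have h1 : 0 < Tt (Lb^2) := by
    rw [Tt_eq]
    have : 1 < exp (2 * Lb^2) := by
      rw [show (1:ℝ) = exp 0 by simp]
      apply exp_lt_exp.2
      positivity
    have h2 : 0 < exp (2 * Lb^2) + 1 := by positivity
    rw [sub_pos, div_lt_one h2]
    linarith
  have h2 : exp (-(2 * Lb^2)) < 1 := by
    rw [show (1:ℝ) = exp 0 by simp]
    apply exp_lt_exp.2
    nlinarith
  have := phi1_pos 1
  have : 0 < 1 - exp (-(2 * Lb^2)) := by linarith
  positivity

lemma mul_nonneg_of_nonpos_nonpos {a b : ℝ} (ha : a ≤ 0) (hb : b ≤ 0) : 0 ≤ a * b := by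
  nlinarith

lemma Gder_ge {Lb b s : ℝ} (hLb : 0 < Lb) (hb : Lb ≤ b) (hs : Lb ≤ s) :
    epsC Lb ≤ Gder b s := by
  have hb0 : 0 < b := lt_of_lt_of_le hLb hb
  have hs0 : 0 < s := lt_of_lt_of_le hLb hs
  -- shift
  have h0 : Gder b s = ∫ x, gq b x * phi1 (x - s) := by
    unfold Gder
    rw [← integral_add_right_eq_self (μ := volume) (fun x => gq b x * phi1 (x - s)) s]
    congr 1
    funext y
    simp
  have hi1 := integrable_gq_phi1_shift b s
  have hi2 : Integrable fun x : ℝ => gq b x * phi1 (x + s) := by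
    have := integrable_gq_phi1_shift b (-s)
    simpa [sub_neg_eq_add] using this
  -- neg trick
  have hneg : ∫ x, gq b x * phi1 (x - s) = - ∫ x, gq b x * phi1 (x + s) := by
    rw [← integral_neg_eq_self (fun x => gq b x * phi1 (x + s)) volume]
    rw [← integral_neg]
    congr 1
    funext x
    have h1 : (-x : ℝ) + s = -(x - s) := by ring
    rw [h1, phi1_even, gq_odd]
    ring
  have hsym : Gder b s = ∫ x, gq b x * ((phi1 (x - s) - phi1 (x + s)) / 2) := by
    have h : (fun x => gq b x * ((phi1 (x - s) - phi1 (x + s)) / 2))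
        = fun x => (gq b x * phi1 (x - s) - gq b x * phi1 (x + s)) / 2 := by
      funext x; ring
    rw [h, integral_div, integral_sub hi1 hi2, h0]
    rw [hneg]
    ring
  set h : ℝ → ℝ := fun x => gq b x * ((phi1 (x - s) - phi1 (x + s)) / 2) with hh
  have h_int : Integrable h := by
    have heq : h = fun x => (gq b x * phi1 (x - s) - gq b x * phi1 (x + s)) / 2 := by
      funext x; simp only [hh]; ring
    rw [heq]
    exact (hi1.sub hi2).div_const 2
  have h_nonneg : ∀ x, 0 ≤ h x := by
    intro x
    rcases le_or_gt 0 x with hx | hx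
    · apply mul_nonneg (gq_nonneg (le_of_lt hb0) hx)
      have hle : phi1 (x + s) ≤ phi1 (x - s) := by
        apply phi1_le_phi1
        rw [abs_of_nonneg (by linarith : (0:ℝ) ≤ x + s), abs_le]
        constructor <;> linarith
      linarith
    · have hg : gq b x ≤ 0 := by
        have h1 : gq b (-x) = -gq b x := gq_odd b x
        have h2 : 0 ≤ gq b (-x) := gq_nonneg (le_of_lt hb0) (by linarith)
        linarith
      have hle : phi1 (x - s) ≤ phi1 (x + s) := by
        apply phi1_le_phi1
        rw [abs_of_nonpos (by linarith : x - s ≤ 0), abs_le]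
        constructor <;> linarith
      exact mul_nonneg_of_nonpos_nonpos hg (by linarith)
  -- restrict to [s, s+1]
  have hsub : ∫ x in Set.Icc s (s+1), h x ≤ ∫ x, h x :=
    setIntegral_le_integral h_int (Filter.Eventually.of_forall h_nonneg)
  have hlow : epsC Lb * (volume (Set.Icc s (s+1))).toReal ≤ ∫ x in Set.Icc s (s+1), h x := by
    rw [mul_comm]
    apply setIntegral_ge_of_const_le measurableSet_Icc
    · rw [Real.volume_Icc]
      exact ENNReal.ofReal_ne_top
    · intro x hx
      obtain ⟨hx1, hx2⟩ := hx
      have hxLb : Lb ≤ x := le_trans hs hx1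
      have hx0 : 0 < x := lt_of_lt_of_le hLb hxLb
      have hg : Tt (Lb^2) ≤ gq b x := by
        have k1 : Lb^2 ≤ x * b := by nlinarith
        have k2 : Tt (Lb^2) ≤ Tt (x * b) := Tt_mono k1
        have k3 : 0 ≤ b * x * sch (x * b) := by
          have := sch_pos (x * b); positivity
        unfold gq
        linarith
      have hphi : phi1 1 * (1 - exp (-(2 * Lb^2))) ≤ phi1 (x - s) - phi1 (x + s) := by
        have k1 : phi1 1 ≤ phi1 (x - s) := by
          apply phi1_le_phi1
          rw [abs_of_nonneg (by linarith : (0:ℝ) ≤ x - s), abs_one]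
          linarith
        have k2 : exp (-(2 * s * x)) ≤ exp (-(2 * Lb^2)) := by
          apply exp_le_exp.2
          nlinarith
        have k3 : phi1 (x + s) = phi1 (x - s) * exp (-(2 * s * x)) := phi1_ratio x s
        have k4 : phi1 (x - s) * exp (-(2 * s * x)) ≤ phi1 (x - s) * exp (-(2 * Lb^2)) :=
          mul_le_mul_of_nonneg_left k2 (le_of_lt (phi1_pos _))
        have k5 : 0 < exp (-(2 * Lb^2)) := exp_pos _
        have k6 : exp (-(2 * Lb^2)) < 1 := by
          rw [show (1:ℝ) = exp 0 by simp]
          apply exp_lt_exp.2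
          nlinarith
        nlinarith [phi1_pos (x - s), phi1_pos 1]
      have hTnn : 0 ≤ Tt (Lb^2) := Tt_nonneg (by positivity)
      have hpos2 : 0 ≤ phi1 1 * (1 - exp (-(2 * Lb^2))) := by
        have k6 : exp (-(2 * Lb^2)) ≤ 1 := by
          rw [show (1:ℝ) = exp 0 by simp]
          apply exp_le_exp.2
          nlinarith
        have := phi1_pos 1
        nlinarith
      show epsC Lb ≤ h x
      unfold epsC
      simp only [hh]
      calc Tt (Lb^2) * (phi1 1 * (1 - exp (-(2 * Lb^2))) / 2)
          ≤ gq b x * (phi1 1 * (1 - exp (-(2 * Lb^2))) / 2) := by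
            apply mul_le_mul_of_nonneg_right hg
            linarith
        _ ≤ gq b x * ((phi1 (x - s) - phi1 (x + s)) / 2) := by
            apply mul_le_mul_of_nonneg_left _ (le_trans hTnn hg)
            linarith
    · exact h_int.integrableOn
  have hvol : (volume (Set.Icc s (s+1))).toReal = 1 := by
    rw [Real.volume_Icc]
    norm_num
  rw [hsym]
  rw [hvol] at hlow
  calc epsC Lb = epsC Lb * 1 := by ring
    _ ≤ ∫ x in Set.Icc s (s+1), h x := hlow
    _ ≤ ∫ x, h x := hsub

lemma sqrt_two_pi_ge_one : 1 ≤ Real.sqrt (2 * π) := by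
  rw [show (1:ℝ) = Real.sqrt 1 by simp]
  apply Real.sqrt_le_sqrt
  nlinarith [pi_gt_three]

lemma phi1_le_one (x : ℝ) : phi1 x ≤ 1 := by
  unfold phi1
  have h1 : exp (-x^2/2) ≤ 1 := by
    rw [show (1:ℝ) = exp 0 by simp]
    apply exp_le_exp.2
    nlinarith [sq_nonneg x]
  have h2 := sqrt_two_pi_ge_one
  have h3 : (Real.sqrt (2 * π))⁻¹ ≤ 1 := by
    rw [inv_le_one_iff₀]; right; exact h2
  have h4 : 0 < (Real.sqrt (2 * π))⁻¹ := by
    have := sqrt_two_pi_pos; positivity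
  nlinarith [exp_pos (-x^2/2)]

lemma epsC_lt_one {Lb : ℝ} (h : 0 < Lb) : epsC Lb < 1 := by
  unfold epsC
  have h1 : Tt (Lb^2) ≤ 1 := by
    have := Tt_abs_le_one (Lb^2)
    rw [abs_le] at this
    exact this.2
  have h2 : phi1 1 ≤ 1 := phi1_le_one 1
  have h3 : 0 < phi1 1 := phi1_pos 1
  have h4 : 0 < exp (-(2 * Lb^2)) := exp_pos _
  have h5 : exp (-(2 * Lb^2)) ≤ 1 := by
    rw [show (1:ℝ) = exp 0 by simp]
    apply exp_le_exp.2
    nlinarith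
  have h6 : 0 ≤ Tt (Lb^2) := Tt_nonneg (by positivity)
  have h7 : phi1 1 * (1 - exp (-(2 * Lb^2))) / 2 ≤ 1/2 := by nlinarith
  have h8 : 0 ≤ phi1 1 * (1 - exp (-(2 * Lb^2))) / 2 := by nlinarith
  nlinarith


/-- Contraction property of `F`: on the box `[L_b,U_b] × [L_θ,U_θ]` there is `κ ∈ (0,1)`
with `|F(x_b, x_θ) − x_θ| ≤ κ·|x_b − x_θ|`. -/
theorem stmt19 (Lb Ub Lθ Uθ : ℝ) (h1 : 0 < Lb) (h2 : Lb ≤ Lθ) (h3 : Lθ ≤ Uθ)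
    (h4 : Uθ ≤ Ub) :
    ∃ κ : ℝ, 0 < κ ∧ κ < 1 ∧ ∀ xb xθ : ℝ, xb ∈ Set.Icc Lb Ub → xθ ∈ Set.Icc Lθ Uθ →
      |Ffun xb xθ - xθ| ≤ κ * |xb - xθ| := by
  have hLθ : 0 < Lθ := lt_of_lt_of_le h1 h2
  set ε := epsC Lb with hεdef
  have hε : 0 < ε := epsC_pos h1
  have hε1 : ε < 1 := epsC_lt_one h1
  refine ⟨max (exp (-(Lθ^2)/2)) (1 - ε), ?_, ?_, ?_⟩
  · exact lt_of_lt_of_le (exp_pos _) (le_max_left _ _)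
  · apply max_lt
    · rw [show (1:ℝ) = exp 0 by simp]
      apply exp_lt_exp.2
      nlinarith
    · linarith
  intro xb xθ hxb hxθ
  obtain ⟨hxb1, hxb2⟩ := hxb
  obtain ⟨hxθ1, hxθ2⟩ := hxθ
  have hxθ0 : 0 < xθ := lt_of_lt_of_le hLθ hxθ1
  have hxb0 : 0 < xb := lt_of_lt_of_le h1 hxb1
  set κ := max (exp (-(Lθ^2)/2)) (1 - ε) with hκdef
  -- monotonicity in b : Ffun is nondecreasing in its first argument
  have hmono_b : ∀ u v : ℝ, u ≤ v → Ffun u xθ ≤ Ffun v xθ := by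
    intro u v huv
    have hdiff : Differentiable ℝ (fun s => Ffun s xθ) :=
      fun s => (hasDerivAt_Ffun_b xθ s).differentiableAt
    have hder : ∀ s : ℝ, (0:ℝ) ≤ deriv (fun s => Ffun s xθ) s := by
      intro s
      rw [(hasDerivAt_Ffun_b xθ s).deriv]
      exact Dfun_nonneg xθ s
    have := mul_sub_le_image_sub_of_le_deriv hdiff hder huv
    simpa using this
  rcases le_total xθ xb with hcase | hcase
  · -- xθ ≤ xb
    have hlow : 0 ≤ Ffun xb xθ - xθ := by
      have := hmono_b xθ xb hcase
      rw [Ffun_diag] at this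
      linarith
    have hup : Ffun xb xθ - xθ ≤ exp (-(xθ^2)/2) * (xb - xθ) := by
      have hD : Convex ℝ (Set.Ici xθ) := convex_Ici xθ
      have hcont : ContinuousOn (fun s => Ffun s xθ) (Set.Ici xθ) :=
        (fun s _ => ((hasDerivAt_Ffun_b xθ s).differentiableAt.continuousAt).continuousWithinAt)
      have hdiff : DifferentiableOn ℝ (fun s => Ffun s xθ) (interior (Set.Ici xθ)) :=
        fun s _ => ((hasDerivAt_Ffun_b xθ s).differentiableAt).differentiableWithinAt
      have hder : ∀ s ∈ interior (Set.Ici xθ), deriv (fun s => Ffun s xθ) s ≤ exp (-(xθ^2)/2) := by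
        intro s hsmem
        rw [interior_Ici] at hsmem
        have hs : xθ < s := hsmem
        rw [(hasDerivAt_Ffun_b xθ s).deriv]
        calc Dfun xθ s ≤ Dfun xθ xθ := Dfun_anti (le_of_lt hxθ0) (le_of_lt hs)
          _ ≤ exp (-xθ^2/2) := Dfun_diag_le xθ
          _ = exp (-(xθ^2)/2) := by ring_nf
      have := hD.image_sub_le_mul_sub_of_deriv_le hcont hdiff hder xθ
        (Set.self_mem_Ici) xb (Set.mem_Ici.2 hcase) hcase
      rw [Ffun_diag] at this
      linarith
    have hexp : exp (-(xθ^2)/2) ≤ κ := by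
      apply le_trans _ (le_max_left _ _)
      apply exp_le_exp.2
      nlinarith
    rw [abs_of_nonneg hlow, abs_of_nonneg (by linarith : (0:ℝ) ≤ xb - xθ)]
    calc Ffun xb xθ - xθ ≤ exp (-(xθ^2)/2) * (xb - xθ) := hup
      _ ≤ κ * (xb - xθ) := mul_le_mul_of_nonneg_right hexp (by linarith)
  · -- xb ≤ xθ
    have hup : Ffun xb xθ - xθ ≤ 0 := by
      have := hmono_b xb xθ hcase
      rw [Ffun_diag] at this
      linarith
    have hlow : ε * (xθ - xb) ≤ Ffun xb xθ - xb := by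
      have hD : Convex ℝ (Set.Ici xb) := convex_Ici xb
      have hcont : ContinuousOn (fun s => Ffun xb s) (Set.Ici xb) :=
        (fun s _ => ((hasDerivAt_Ffun_θ xb s).differentiableAt.continuousAt).continuousWithinAt)
      have hdiff : DifferentiableOn ℝ (fun s => Ffun xb s) (interior (Set.Ici xb)) :=
        fun s _ => ((hasDerivAt_Ffun_θ xb s).differentiableAt).differentiableWithinAt
      have hder : ∀ s ∈ interior (Set.Ici xb), ε ≤ deriv (fun s => Ffun xb s) s := by
        intro s hsmem
        rw [interior_Ici] at hsmem
        have hs : xb < s := hsmem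
        rw [(hasDerivAt_Ffun_θ xb s).deriv]
        exact Gder_ge h1 hxb1 (le_trans hxb1 (le_of_lt hs))
      have := hD.mul_sub_le_image_sub_of_le_deriv hcont hdiff hder xb
        (Set.self_mem_Ici) xθ (Set.mem_Ici.2 hcase) hcase
      rw [Ffun_diag] at this
      linarith
    have h1ε : 1 - ε ≤ κ := le_max_right _ _
    rw [abs_of_nonpos hup, abs_of_nonpos (by linarith : xb - xθ ≤ 0)]
    have : -(Ffun xb xθ - xθ) ≤ (1 - ε) * (xθ - xb) := by linarith
    calc -(Ffun xb xθ - xθ) ≤ (1 - ε) * (xθ - xb) := this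
      _ ≤ κ * (xθ - xb) := mul_le_mul_of_nonneg_right h1ε (by linarith)
      _ = κ * -(xb - xθ) := by ring
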